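/- Let 𝔤, ⟨·,·⟩, Γ, φ be as above, with the additional finiteness hypothesis: for any a, b ∈ 𝔤, [g·a, b] = 0 and ⟨g·a, b⟩ = 0 for all but finitely many g ∈ Γ. Then for the Γ-action on ĝ defined by g·(a⊗tᵐ) = φ(g)ᵐ(g·a ⊗ tᵐ), g·k = k, the pair (ĝ, Γ) satisfies: for any x, y ∈ ĝ, [g·x, y] = 0 for all but finitely many g ∈ Γ. Consequently the bracket [x,y]_Γ = Σ_{g∈Γ}[g·x, y] is well-defined on ĝ and descends to a Lie algebra structure on the quotient ĝ[Γ] of ĝ by span{g·x − x : g ∈ Γ, x ∈ ĝ}. -/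

import Mathlib

open scoped BigOperators

/-- The affine Lie algebra bracket on `ĝ = (𝔤 ⊗ ℂ[t,t⁻¹]) ⊕ ℂk`, modelled on
`(ℤ →₀ 𝔤) × ℂ`. -/
noncomputable def affBrF {α : Type*} [AddCommGroup α] [Module ℂ α]
    (br : α → α → α) (Bf : α → α → ℂ)
    (x y : (ℤ →₀ α) × ℂ) : (ℤ →₀ α) × ℂ :=
  (∑ m ∈ x.1.support, ∑ n ∈ y.1.support, Finsupp.single (m + n) (br (x.1 m) (y.1 n)),
   ∑ m ∈ x.1.support, (m : ℂ) * Bf (x.1 m) (y.1 (-m)))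

/-- The twisted action `g·(a⊗tᵐ + βk) = cᵐ(ρ a ⊗ tᵐ) + βk` on `ĝ`. -/
noncomputable def affActF {α : Type*} [AddCommGroup α] [Module ℂ α]
    (ρ : α →ₗ[ℂ] α) (c : ℂˣ) (x : (ℤ →₀ α) × ℂ) : (ℤ →₀ α) × ℂ :=
  (x.1.sum fun m v => Finsupp.single m (((c ^ m : ℂˣ) : ℂ) • ρ v), x.2)


open scoped BigOperators

namespace TwistAux

variable {𝔤 : Type*} [LieRing 𝔤] [LieAlgebra ℂ 𝔤]

/-- The bracket as a bilinear map on finsupps. -/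
noncomputable def Tm (B : 𝔤 →ₗ[ℂ] 𝔤 →ₗ[ℂ] ℂ) :
    (ℤ →₀ 𝔤) →ₗ[ℂ] (ℤ →₀ 𝔤) →ₗ[ℂ] ((ℤ →₀ 𝔤) × ℂ) :=
  LinearMap.mk₂ ℂ
    (fun f g => (f.sum fun m a => g.sum fun n b => Finsupp.single (m + n) ⁅a, b⁆,
      f.sum fun m a => (m : ℂ) * B a (g (-m))))
    (fun f f' g => by
      refine Prod.ext ?_ ?_ <;> dsimp
      · rw [Finsupp.sum_add_index' (fun m => by simp) (fun m a a' => by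
          simp [add_lie, Finsupp.single_add, Finsupp.sum_add])]
      · rw [Finsupp.sum_add_index' (fun m => by simp) (fun m a a' => by
          simp [mul_add, map_add, LinearMap.add_apply])])
    (fun c f g => by
      refine Prod.ext ?_ ?_ <;> dsimp
      · rw [Finsupp.sum_smul_index' (fun m => by simp), Finsupp.smul_sum]
        exact Finsupp.sum_congr fun m _ => by
          simp [smul_lie, Finsupp.smul_sum, Finsupp.smul_single]
      · rw [Finsupp.sum_smul_index' (fun m => by simp), ← smul_eq_mul, Finsupp.smul_sum]
        exact Finsupp.sum_congr fun m _ => by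
          simp [map_smul, smul_eq_mul]; ring)
    (fun f g g' => by
      refine Prod.ext ?_ ?_ <;> dsimp
      · rw [← Finsupp.sum_add]
        exact Finsupp.sum_congr fun m _ => by
          rw [Finsupp.sum_add_index' (fun n => by simp) (fun n b b' => by
            simp [lie_add, Finsupp.single_add])]
      · rw [← Finsupp.sum_add]
        exact Finsupp.sum_congr fun m _ => by simp [mul_add])
    (fun c f g => by
      refine Prod.ext ?_ ?_ <;> dsimp
      · rw [Finsupp.smul_sum]
        exact Finsupp.sum_congr fun m _ => by
          rw [Finsupp.sum_smul_index' (fun n => by simp), Finsupp.smul_sum]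
          exact Finsupp.sum_congr fun n _ => by simp [lie_smul, Finsupp.smul_single]
      · rw [← smul_eq_mul, Finsupp.smul_sum]
        exact Finsupp.sum_congr fun m _ => by
          simp [Finsupp.smul_apply, map_smul, smul_eq_mul]; ring)

variable (B : 𝔤 →ₗ[ℂ] 𝔤 →ₗ[ℂ] ℂ)

/-- The bracket as a bilinear map on `V = (ℤ →₀ 𝔤) × ℂ`. -/
noncomputable def Tp : ((ℤ →₀ 𝔤) × ℂ) →ₗ[ℂ] ((ℤ →₀ 𝔤) × ℂ) →ₗ[ℂ] ((ℤ →₀ 𝔤) × ℂ) :=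
  ((Tm B).comp (LinearMap.fst ℂ (ℤ →₀ 𝔤) ℂ)).compl₂ (LinearMap.fst ℂ (ℤ →₀ 𝔤) ℂ)

lemma Tp_eq (x y : (ℤ →₀ 𝔤) × ℂ) :
    affBrF (fun a b => ⁅a, b⁆) (fun a b => B a b) x y = Tp B x y := rfl

/-- The twisted action on finsupps. -/
noncomputable def Mm (ρ : 𝔤 →ₗ[ℂ] 𝔤) (c : ℂˣ) : (ℤ →₀ 𝔤) →ₗ[ℂ] (ℤ →₀ 𝔤) :=
  Finsupp.lsum ℂ fun m => (Finsupp.lsingle m).comp (((c ^ m : ℂˣ) : ℂ) • ρ)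

/-- The twisted action on `V`. -/
noncomputable def Sp (ρ : 𝔤 →ₗ[ℂ] 𝔤) (c : ℂˣ) :
    ((ℤ →₀ 𝔤) × ℂ) →ₗ[ℂ] ((ℤ →₀ 𝔤) × ℂ) :=
  (Mm ρ c).prodMap LinearMap.id

lemma Sp_eq (ρ : 𝔤 →ₗ[ℂ] 𝔤) (c : ℂˣ) (x : (ℤ →₀ 𝔤) × ℂ) :
    affActF ρ c x = Sp ρ c x := rfl

lemma Mm_single (ρ : 𝔤 →ₗ[ℂ] 𝔤) (c : ℂˣ) (m : ℤ) (a : 𝔤) :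
    Mm ρ c (Finsupp.single m a) = Finsupp.single m (((c ^ m : ℂˣ) : ℂ) • ρ a) := by
  simp [Mm]

lemma Mm_apply (ρ : 𝔤 →ₗ[ℂ] 𝔤) (c : ℂˣ) (f : ℤ →₀ 𝔤) (k : ℤ) :
    Mm ρ c f k = ((c ^ k : ℂˣ) : ℂ) • ρ (f k) := by
  classical
  induction f using Finsupp.induction_linear with
  | zero => simp
  | add f g hf hg => simp [hf, hg, Finsupp.add_apply, smul_add, map_add]
  | single n b =>
      rw [Mm_single]
      rcases eq_or_ne n k with rfl | h
      · simp
      · simp [Finsupp.single_apply, h, Ne.symm h]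

lemma Tp_single (m n : ℤ) (a b : 𝔤) (α β : ℂ) :
    Tp B (Finsupp.single m a, α) (Finsupp.single n b, β)
      = (Finsupp.single (m + n) ⁅a, b⁆,
          if -m = n then (m : ℂ) * B a b else 0) := by
  classical
  show ((Finsupp.single m a).sum fun m' a' => (Finsupp.single n b).sum
        fun n' b' => Finsupp.single (m' + n') ⁅a', b'⁆,
      (Finsupp.single m a).sum fun m' a' => (m' : ℂ) * B a' ((Finsupp.single n b) (-m'))) = _
  rcases eq_or_ne a 0 with rfl | ha
  · simp
  · refine Prod.ext ?_ ?_ <;> dsimp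
    · rw [Finsupp.sum_single_index (by simp), Finsupp.sum_single_index (by simp)]
    · rw [Finsupp.sum_single_index (by simp), Finsupp.single_apply]
      rcases eq_or_ne (-m) n with h | h
      · simp [h]
      · simp [h, Ne.symm h]

end TwistAux
namespace TwistAux

section Grp

variable {𝔤 : Type*} [LieRing 𝔤] [LieAlgebra ℂ 𝔤] (B : 𝔤 →ₗ[ℂ] 𝔤 →ₗ[ℂ] ℂ)

lemma Tp_def (x y : (ℤ →₀ 𝔤) × ℂ) : Tp B x y = Tm B x.1 y.1 := rfl

lemma Sp_pair (ρ : 𝔤 →ₗ[ℂ] 𝔤) (c : ℂˣ) (f : ℤ →₀ 𝔤) (α : ℂ) :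
    Sp ρ c (f, α) = (Mm ρ c f, α) := rfl

lemma Tp_zero_left (β : ℂ) (v : (ℤ →₀ 𝔤) × ℂ) :
    Tp B ((0 : ℤ →₀ 𝔤), β) v = 0 := by
  rw [Tp_def]; simp

lemma Tp_zero_right (β : ℂ) (u : (ℤ →₀ 𝔤) × ℂ) :
    Tp B u ((0 : ℤ →₀ 𝔤), β) = 0 := by
  rw [Tp_def]; simp

/-- Induction principle on `V = (ℤ →₀ 𝔤) × ℂ`. -/
lemma Vind {p : ((ℤ →₀ 𝔤) × ℂ) → Prop}
    (hadd : ∀ u v, p u → p v → p (u + v))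
    (hs : ∀ (m : ℤ) (a : 𝔤), p (Finsupp.single m a, 0))
    (hk : ∀ β : ℂ, p ((0 : ℤ →₀ 𝔤), β)) : ∀ u, p u := by
  intro u
  have hu : (u.1, (0 : ℂ)) + ((0 : ℤ →₀ 𝔤), u.2) = u := by
    simp [Prod.ext_iff]
  rw [← hu]
  refine hadd _ _ ?_ (hk u.2)
  induction u.1 using Finsupp.induction_linear with
  | zero => simpa using hk 0
  | add f g hf hg => simpa using hadd (f, 0) (g, 0) hf hg
  | single m a => exact hs m a

variable {Γ : Type*} [Group Γ] (σ : Γ → 𝔤 →ₗ[ℂ] 𝔤) (φ : Γ →* ℂˣ)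

lemma Mm_comp (hmul : ∀ g h : Γ, σ (g * h) = (σ g).comp (σ h)) (g h : Γ) (f : ℤ →₀ 𝔤) :
    Mm (σ g) (φ g) (Mm (σ h) (φ h) f) = Mm (σ (g * h)) (φ (g * h)) f := by
  induction f using Finsupp.induction_linear with
  | zero => simp
  | add f f' hf hf' => simp [map_add, hf, hf']
  | single m a =>
      rw [Mm_single, Mm_single]
      simp only [hmul, LinearMap.comp_apply, map_smul, map_mul, mul_zpow, Units.val_mul,
        smul_smul]
      rw [Mm_single]
      simp only [LinearMap.comp_apply, mul_zpow, Units.val_mul, smul_smul]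

lemma Sp_comp (hmul : ∀ g h : Γ, σ (g * h) = (σ g).comp (σ h)) (g h : Γ)
    (x : (ℤ →₀ 𝔤) × ℂ) :
    Sp (σ g) (φ g) (Sp (σ h) (φ h) x) = Sp (σ (g * h)) (φ (g * h)) x := by
  obtain ⟨f, α⟩ := x
  rw [Sp_pair, Sp_pair, Sp_pair, Mm_comp σ φ hmul]

lemma Sp_one (hone : σ 1 = LinearMap.id) (x : (ℤ →₀ 𝔤) × ℂ) :
    Sp (σ 1) (φ 1) x = x := by
  obtain ⟨f, α⟩ := x
  rw [Sp_pair]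
  congr 1
  induction f using Finsupp.induction_linear with
  | zero => simp
  | add f f' hf hf' => rw [map_add, hf, hf']
  | single m a => rw [Mm_single]; simp [hone]

/-- Equivariance of the affine bracket under the twisted action. -/
lemma Teqv (hbr : ∀ (g : Γ) (a b : 𝔤), σ g ⁅a, b⁆ = ⁅σ g a, σ g b⁆)
    (hpres : ∀ (g : Γ) (a b : 𝔤), B (σ g a) (σ g b) = B a b)
    (g : Γ) (u v : (ℤ →₀ 𝔤) × ℂ) :
    Tp B (Sp (σ g) (φ g) u) (Sp (σ g) (φ g) v) = Sp (σ g) (φ g) (Tp B u v) := by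
  induction u using Vind with
  | hadd u u' hu hu' => simp [map_add, LinearMap.add_apply, hu, hu']
  | hk β => simp [Sp_pair, map_zero, Tp_zero_left]
  | hs m a =>
    induction v using Vind with
    | hadd v v' hv hv' => simp [map_add, hv, hv']
    | hk β => simp [Sp_pair, map_zero, Tp_zero_right]
    | hs n b =>
      rw [Sp_pair, Sp_pair, Mm_single, Mm_single, Tp_single, Tp_single, Sp_pair, Mm_single]
      refine Prod.ext ?_ ?_
      · dsimp
        rw [smul_lie, lie_smul, smul_smul, ← hbr, ← Units.val_mul, ← zpow_add]
      · dsimp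
        rcases eq_or_ne (-m) n with h | h
        · rw [if_pos h, if_pos h, ← h]
          simp only [map_smul, LinearMap.smul_apply, smul_eq_mul, hpres]
          have hc : ((φ g ^ m : ℂˣ) : ℂ) * ((φ g ^ (-m) : ℂˣ) : ℂ) = 1 := by
            rw [← Units.val_mul, ← zpow_add]; simp
          linear_combination ((m : ℂ) * B a b) * hc
        · rw [if_neg h, if_neg h]

/-- Exact antisymmetry of the affine bracket. -/
lemma Tantisym (hsym : ∀ a b : 𝔤, B a b = B b a) (u v : (ℤ →₀ 𝔤) × ℂ) :
    Tp B u v + Tp B v u = 0 := by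
  induction u using Vind with
  | hadd u u' hu hu' =>
      calc Tp B (u + u') v + Tp B v (u + u')
          = (Tp B u v + Tp B v u) + (Tp B u' v + Tp B v u') := by
            rw [map_add, LinearMap.add_apply, map_add]; abel
        _ = 0 := by rw [hu, hu']; simp
  | hk β => simp [Tp_zero_left, Tp_zero_right]
  | hs m a =>
    induction v using Vind with
    | hadd v v' hv hv' =>
        calc Tp B (Finsupp.single m a, 0) (v + v') + Tp B (v + v') (Finsupp.single m a, 0)
            = (Tp B (Finsupp.single m a, 0) v + Tp B v (Finsupp.single m a, 0))
              + (Tp B (Finsupp.single m a, 0) v' + Tp B v' (Finsupp.single m a, 0)) := by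
              rw [map_add, map_add, LinearMap.add_apply]; abel
          _ = 0 := by rw [hv, hv']; simp
    | hk β => simp [Tp_zero_left, Tp_zero_right]
    | hs n b =>
      rw [Tp_single, Tp_single]
      refine Prod.ext ?_ ?_
      · dsimp
        rw [add_comm n m, ← Finsupp.single_add, ← lie_skew a b, neg_add_cancel,
          Finsupp.single_zero]
      · dsimp
        rcases eq_or_ne (-m) n with h | h
        · rw [if_pos h, if_pos (by omega : -n = m), hsym b a, ← h]
          push_cast; ring
        · rw [if_neg h, if_neg (by omega : ¬ -n = m), add_zero]

/-- The Jacobi identity (Leibniz form) for the affine bracket. -/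
lemma Tjacobi (hinv : ∀ a b c : 𝔤, B ⁅a, b⁆ c = B a ⁅b, c⁆)
    (u v z : (ℤ →₀ 𝔤) × ℂ) :
    Tp B u (Tp B v z) - Tp B v (Tp B u z) - Tp B (Tp B u v) z = 0 := by
  induction u using Vind with
  | hadd u u' hu hu' =>
      calc Tp B (u + u') (Tp B v z) - Tp B v (Tp B (u + u') z)
            - Tp B (Tp B (u + u') v) z
          = (Tp B u (Tp B v z) - Tp B v (Tp B u z) - Tp B (Tp B u v) z)
            + (Tp B u' (Tp B v z) - Tp B v (Tp B u' z) - Tp B (Tp B u' v) z) := by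
            simp only [map_add, LinearMap.add_apply]; abel
        _ = 0 := by rw [hu, hu']; simp
  | hk β => simp [Tp_zero_left]
  | hs m a =>
    induction v using Vind with
    | hadd v v' hv hv' =>
        calc Tp B (Finsupp.single m a, 0) (Tp B (v + v') z)
              - Tp B (v + v') (Tp B (Finsupp.single m a, 0) z)
              - Tp B (Tp B (Finsupp.single m a, 0) (v + v')) z
            = (Tp B (Finsupp.single m a, 0) (Tp B v z)
                - Tp B v (Tp B (Finsupp.single m a, 0) z)
                - Tp B (Tp B (Finsupp.single m a, 0) v) z)
              + (Tp B (Finsupp.single m a, 0) (Tp B v' z)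
                - Tp B v' (Tp B (Finsupp.single m a, 0) z)
                - Tp B (Tp B (Finsupp.single m a, 0) v') z) := by
              simp only [map_add, LinearMap.add_apply]; abel
          _ = 0 := by rw [hv, hv']; simp
    | hk β => simp [Tp_zero_left, Tp_zero_right]
    | hs n b =>
      induction z using Vind with
      | hadd z z' hz hz' =>
          calc Tp B (Finsupp.single m a, 0) (Tp B (Finsupp.single n b, 0) (z + z'))
                - Tp B (Finsupp.single n b, 0) (Tp B (Finsupp.single m a, 0) (z + z'))
                - Tp B (Tp B (Finsupp.single m a, 0) (Finsupp.single n b, 0)) (z + z')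
              = (Tp B (Finsupp.single m a, 0) (Tp B (Finsupp.single n b, 0) z)
                  - Tp B (Finsupp.single n b, 0) (Tp B (Finsupp.single m a, 0) z)
                  - Tp B (Tp B (Finsupp.single m a, 0) (Finsupp.single n b, 0)) z)
                + (Tp B (Finsupp.single m a, 0) (Tp B (Finsupp.single n b, 0) z')
                  - Tp B (Finsupp.single n b, 0) (Tp B (Finsupp.single m a, 0) z')
                  - Tp B (Tp B (Finsupp.single m a, 0) (Finsupp.single n b, 0)) z') := by
                simp only [map_add, LinearMap.add_apply]; abel
            _ = 0 := by rw [hz, hz']; simp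
      | hk β => simp [Tp_zero_right]
      | hs p c =>
        have hTv : Tp B (Finsupp.single n b, (0:ℂ)) (Finsupp.single p c, (0:ℂ))
            = (Finsupp.single (n + p) ⁅b, c⁆, if -n = p then (n : ℂ) * B b c else 0) :=
          Tp_single B n p b c 0 0
        have hTu : Tp B (Finsupp.single m a, (0:ℂ)) (Finsupp.single p c, (0:ℂ))
            = (Finsupp.single (m + p) ⁅a, c⁆, if -m = p then (m : ℂ) * B a c else 0) :=
          Tp_single B m p a c 0 0
        have hTuv : Tp B (Finsupp.single m a, (0:ℂ)) (Finsupp.single n b, (0:ℂ))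
            = (Finsupp.single (m + n) ⁅a, b⁆, if -m = n then (m : ℂ) * B a b else 0) :=
          Tp_single B m n a b 0 0
        rw [hTv, hTu, hTuv, Tp_single, Tp_single, Tp_single]
        refine Prod.ext ?_ ?_
        · dsimp
          rw [show n + (m + p) = m + (n + p) by ring, show m + n + p = m + (n + p) by ring,
            ← Finsupp.single_sub, ← Finsupp.single_sub,
            show ⁅a, ⁅b, c⁆⁆ - ⁅b, ⁅a, c⁆⁆ - ⁅⁅a, b⁆, c⁆ = 0 from by
              rw [leibniz_lie a b c]; abel,
            Finsupp.single_zero]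
        · dsimp
          have e1 : B ⁅a, b⁆ c = B a ⁅b, c⁆ := hinv a b c
          have e2 : B b ⁅a, c⁆ = - B a ⁅b, c⁆ := by
            rw [← hinv b a c, ← lie_skew b a, map_neg, LinearMap.neg_apply, e1]
          by_cases h : m + n + p = 0
          · rw [if_pos (by omega : -m = n + p), if_pos (by omega : -n = m + p),
              if_pos (by omega : -(m + n) = p), e1, e2]
            push_cast
            ring
          · rw [if_neg (by omega : ¬ -m = n + p), if_neg (by omega : ¬ -n = m + p),
              if_neg (by omega : ¬ -(m + n) = p)]
            simp

end Grp

end TwistAux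
namespace TwistAux

section Fin

variable {𝔤 : Type*} [LieRing 𝔤] [LieAlgebra ℂ 𝔤] (B : 𝔤 →ₗ[ℂ] 𝔤 →ₗ[ℂ] ℂ)
variable {Γ : Type*} [Group Γ] (σ : Γ → 𝔤 →ₗ[ℂ] 𝔤) (φ : Γ →* ℂˣ)

lemma Lmap_finsum {ι : Type*} {M N : Type*} [AddCommMonoid M] [Module ℂ M]
    [AddCommMonoid N] [Module ℂ N] (L : M →ₗ[ℂ] N) {f : ι → M}
    (hf : (Function.support f).Finite) : L (∑ᶠ i, f i) = ∑ᶠ i, L (f i) := by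
  simpa using L.toAddMonoidHom.map_finsum hf

lemma Tp_vanish (g : Γ) (x y : (ℤ →₀ 𝔤) × ℂ)
    (h : ∀ m ∈ x.1.support, ∀ n ∈ insert (-m) y.1.support,
      ⁅σ g (x.1 m), y.1 n⁆ = 0 ∧ B (σ g (x.1 m)) (y.1 n) = 0) :
    Tp B (Sp (σ g) (φ g) x) y = 0 := by
  classical
  refine Prod.ext ?_ ?_
  · show ((Mm (σ g) (φ g) x.1).sum fun m a =>
        y.1.sum fun n b => Finsupp.single (m + n) ⁅a, b⁆) = 0
    simp only [Finsupp.sum]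
    refine Finset.sum_eq_zero fun m _ => Finset.sum_eq_zero fun n hn => ?_
    rw [Mm_apply]
    by_cases hx : m ∈ x.1.support
    · have h0 := (h m hx n (Finset.mem_insert_of_mem hn)).1
      rw [smul_lie, h0, smul_zero, Finsupp.single_zero]
    · have : x.1 m = 0 := Finsupp.notMem_support_iff.mp hx
      simp [this]
  · show ((Mm (σ g) (φ g) x.1).sum fun m a => (m : ℂ) * B a (y.1 (-m))) = 0
    simp only [Finsupp.sum]
    refine Finset.sum_eq_zero fun m _ => ?_
    rw [Mm_apply]
    by_cases hx : m ∈ x.1.support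
    · have h0 := (h m hx (-m) (Finset.mem_insert_self _ _)).2
      rw [map_smul, LinearMap.smul_apply, h0, smul_zero, mul_zero]
    · have : x.1 m = 0 := Finsupp.notMem_support_iff.mp hx
      simp [this]

lemma key_finite (hfin : ∀ a b : 𝔤, {g : Γ | ⁅σ g a, b⁆ ≠ 0 ∨ B (σ g a) b ≠ 0}.Finite)
    (x y : (ℤ →₀ 𝔤) × ℂ) :
    {g : Γ | Tp B (Sp (σ g) (φ g) x) y ≠ 0}.Finite := by
  classical
  have hsub : {g : Γ | Tp B (Sp (σ g) (φ g) x) y ≠ 0} ⊆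
      ⋃ m ∈ (x.1.support : Set ℤ), ⋃ n ∈ ((insert (-m) y.1.support : Finset ℤ) : Set ℤ),
        {g : Γ | ⁅σ g (x.1 m), y.1 n⁆ ≠ 0 ∨ B (σ g (x.1 m)) (y.1 n) ≠ 0} := by
    intro g hg
    by_contra hnot
    apply hg
    apply Tp_vanish B σ φ g x y
    intro m hm n hn
    simp only [Set.mem_iUnion, Set.mem_setOf_eq, not_exists, not_or, not_not,
      Finset.mem_coe] at hnot
    exact hnot m hm n hn
  exact ((x.1.support.finite_toSet).biUnion fun m _ =>
    ((insert (-m) y.1.support).finite_toSet).biUnion fun n _ => hfin _ _).subset hsub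

lemma finsum_rect_swap {M : Type*} [AddCommMonoid M] {F : Γ → Γ → M} (G H : Finset Γ)
    (hF : ∀ g h, F g h ≠ 0 → g ∈ G ∧ h ∈ H) :
    ∑ᶠ g, ∑ᶠ h, F g h = ∑ᶠ h, ∑ᶠ g, F g h := by
  have l1 : ∀ g, (∑ᶠ h, F g h) = ∑ h ∈ H, F g h := fun g =>
    finsum_eq_sum_of_support_subset _ fun h hh => (hF g h hh).2
  have l2 : ∀ h, (∑ᶠ g, F g h) = ∑ g ∈ G, F g h := fun h =>
    finsum_eq_sum_of_support_subset _ fun g hg => (hF g h hg).1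
  have e1 : (∑ᶠ g, ∑ᶠ h, F g h) = ∑ g ∈ G, ∑ h ∈ H, F g h := by
    rw [finsum_congr l1]
    refine finsum_eq_sum_of_support_subset _ fun g hg => ?_
    obtain ⟨h, _, hFh⟩ := Finset.exists_ne_zero_of_sum_ne_zero hg
    exact (hF g h hFh).1
  have e2 : (∑ᶠ h, ∑ᶠ g, F g h) = ∑ h ∈ H, ∑ g ∈ G, F g h := by
    rw [finsum_congr l2]
    refine finsum_eq_sum_of_support_subset _ fun h hh => ?_
    obtain ⟨g, _, hFg⟩ := Finset.exists_ne_zero_of_sum_ne_zero hh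
    exact (hF g h hFg).2
  rw [e1, e2, Finset.sum_comm]

end Fin

end TwistAux
/-- under the finiteness hypotheses on `𝔤`, the pair `(ĝ, Γ)` satisfies
the finiteness condition `[g·x, y] = 0` for all but finitely many `g`, so the averaged
bracket `[x,y]_Γ = ∑ᶠ g, [g·x, y]` is well defined; it kills the generators
`g·x − x` on the left, maps into their span on the right, is antisymmetric modulo that
span, and satisfies the Jacobi identity — hence it descends to a Lie algebra structure
on the quotient `ĝ[Γ]`. -/
theorem generalized_twisted_affine_lie_algebra
    {𝔤 : Type*} [LieRing 𝔤] [LieAlgebra ℂ 𝔤]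
    {Γ : Type*} [Group Γ] (σ : Γ → 𝔤 →ₗ[ℂ] 𝔤) (φ : Γ →* ℂˣ)
    (B : 𝔤 →ₗ[ℂ] 𝔤 →ₗ[ℂ] ℂ)
    (hone : σ 1 = LinearMap.id)
    (hmul : ∀ g h : Γ, σ (g * h) = (σ g).comp (σ h))
    (hbr : ∀ (g : Γ) (a b : 𝔤), σ g ⁅a, b⁆ = ⁅σ g a, σ g b⁆)
    (hsym : ∀ a b : 𝔤, B a b = B b a)
    (hinv : ∀ a b c : 𝔤, B ⁅a, b⁆ c = B a ⁅b, c⁆)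
    (hpres : ∀ (g : Γ) (a b : 𝔤), B (σ g a) (σ g b) = B a b)
    (hfin : ∀ a b : 𝔤, {g : Γ | ⁅σ g a, b⁆ ≠ 0 ∨ B (σ g a) b ≠ 0}.Finite) :
    (∀ x y : (ℤ →₀ 𝔤) × ℂ,
        {g : Γ | affBrF (fun a b => ⁅a, b⁆) (fun a b => B a b)
          (affActF (σ g) (φ g) x) y ≠ 0}.Finite) ∧
    (∀ (g : Γ) (x y : (ℤ →₀ 𝔤) × ℂ),
        (∑ᶠ h : Γ, affBrF (fun a b => ⁅a, b⁆) (fun a b => B a b)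
          (affActF (σ h) (φ h) (affActF (σ g) (φ g) x - x)) y) = 0) ∧
    (∀ (g : Γ) (x y : (ℤ →₀ 𝔤) × ℂ),
        (∑ᶠ h : Γ, affBrF (fun a b => ⁅a, b⁆) (fun a b => B a b)
            (affActF (σ h) (φ h) x) (affActF (σ g) (φ g) y - y))
          ∈ Submodule.span ℂ
              {z : (ℤ →₀ 𝔤) × ℂ | ∃ (g' : Γ) (w : (ℤ →₀ 𝔤) × ℂ),
                z = affActF (σ g') (φ g') w - w}) ∧
    (∀ x y : (ℤ →₀ 𝔤) × ℂ,
        (∑ᶠ g : Γ, affBrF (fun a b => ⁅a, b⁆) (fun a b => B a b)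
            (affActF (σ g) (φ g) x) y)
          + (∑ᶠ g : Γ, affBrF (fun a b => ⁅a, b⁆) (fun a b => B a b)
              (affActF (σ g) (φ g) y) x)
          ∈ Submodule.span ℂ
              {z : (ℤ →₀ 𝔤) × ℂ | ∃ (g' : Γ) (w : (ℤ →₀ 𝔤) × ℂ),
                z = affActF (σ g') (φ g') w - w}) ∧
    (∀ x y z : (ℤ →₀ 𝔤) × ℂ,
        (∑ᶠ g : Γ, affBrF (fun a b => ⁅a, b⁆) (fun a b => B a b) (affActF (σ g) (φ g) x)
            (∑ᶠ h : Γ, affBrF (fun a b => ⁅a, b⁆) (fun a b => B a b)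
              (affActF (σ h) (φ h) y) z))
          - (∑ᶠ g : Γ, affBrF (fun a b => ⁅a, b⁆) (fun a b => B a b) (affActF (σ g) (φ g) y)
              (∑ᶠ h : Γ, affBrF (fun a b => ⁅a, b⁆) (fun a b => B a b)
                (affActF (σ h) (φ h) x) z))
          - (∑ᶠ g : Γ, affBrF (fun a b => ⁅a, b⁆) (fun a b => B a b)
              (affActF (σ g) (φ g)
                (∑ᶠ h : Γ, affBrF (fun a b => ⁅a, b⁆) (fun a b => B a b)
                  (affActF (σ h) (φ h) x) y)) z) = 0) := by
  classical
  have key : ∀ x y : (ℤ →₀ 𝔤) × ℂ,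
      {g : Γ | TwistAux.Tp B (TwistAux.Sp (σ g) (φ g) x) y ≠ 0}.Finite :=
    TwistAux.key_finite B σ φ hfin
  simp only [TwistAux.Tp_eq, TwistAux.Sp_eq]
  refine ⟨key, ?_, ?_, ?_, ?_⟩
  -- Part 2 : left generators are killed
  · intro g x y
    have h1 : ∀ h : Γ, TwistAux.Tp B (TwistAux.Sp (σ h) (φ h)
          (TwistAux.Sp (σ g) (φ g) x - x)) y
        = TwistAux.Tp B (TwistAux.Sp (σ (h * g)) (φ (h * g)) x) y
          - TwistAux.Tp B (TwistAux.Sp (σ h) (φ h) x) y := by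
      intro h
      rw [map_sub, TwistAux.Sp_comp σ φ hmul h g, map_sub, LinearMap.sub_apply]
    rw [finsum_congr h1]
    have hfa : (Function.support fun h : Γ =>
        TwistAux.Tp B (TwistAux.Sp (σ (h * g)) (φ (h * g)) x) y).Finite := by
      have he : (Function.support fun h : Γ =>
            TwistAux.Tp B (TwistAux.Sp (σ (h * g)) (φ (h * g)) x) y)
          = (fun h : Γ => h * g) ⁻¹'
            {g' : Γ | TwistAux.Tp B (TwistAux.Sp (σ g') (φ g') x) y ≠ 0} := rfl
      rw [he]
      exact (key x y).preimage (Set.injOn_of_injective (mul_left_injective g))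
    rw [finsum_sub_distrib hfa (key x y),
      show (∑ᶠ h : Γ, TwistAux.Tp B (TwistAux.Sp (σ (h * g)) (φ (h * g)) x) y)
          = ∑ᶠ h : Γ, TwistAux.Tp B (TwistAux.Sp (σ h) (φ h) x) y from
        finsum_eq_of_bijective (fun h : Γ => h * g) (Group.mulRight_bijective g)
          (fun h => rfl),
      sub_self]
  -- Part 3 : right generators land in the span
  · intro g x y
    have h1 : ∀ h : Γ, TwistAux.Tp B (TwistAux.Sp (σ h) (φ h) x)
          (TwistAux.Sp (σ g) (φ g) y - y)
        = TwistAux.Tp B (TwistAux.Sp (σ h) (φ h) x) (TwistAux.Sp (σ g) (φ g) y)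
          - TwistAux.Tp B (TwistAux.Sp (σ h) (φ h) x) y := fun h => map_sub _ _ _
    rw [finsum_congr h1,
      finsum_sub_distrib (key x (TwistAux.Sp (σ g) (φ g) y)) (key x y)]
    have h2 : ∀ h : Γ, TwistAux.Tp B (TwistAux.Sp (σ h) (φ h) x)
          (TwistAux.Sp (σ g) (φ g) y)
        = TwistAux.Sp (σ g) (φ g)
            (TwistAux.Tp B (TwistAux.Sp (σ (g⁻¹ * h)) (φ (g⁻¹ * h)) x) y) := by
      intro h
      rw [← TwistAux.Teqv B σ φ hbr hpres g, TwistAux.Sp_comp σ φ hmul,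
        mul_inv_cancel_left]
    rw [finsum_congr h2,
      show (∑ᶠ h : Γ, TwistAux.Sp (σ g) (φ g)
          (TwistAux.Tp B (TwistAux.Sp (σ (g⁻¹ * h)) (φ (g⁻¹ * h)) x) y))
        = ∑ᶠ h : Γ, TwistAux.Sp (σ g) (φ g)
            (TwistAux.Tp B (TwistAux.Sp (σ h) (φ h) x) y) from
        finsum_eq_of_bijective (fun h : Γ => g⁻¹ * h)
          (Group.mulLeft_bijective g⁻¹) (fun h => rfl),
      ← TwistAux.Lmap_finsum (TwistAux.Sp (σ g) (φ g)) (key x y)]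
    exact Submodule.subset_span ⟨g, _, rfl⟩
  -- Part 4 : antisymmetry modulo the span
  · intro x y
    have hxg : ∀ g : Γ, TwistAux.Sp (σ g) (φ g)
        (TwistAux.Sp (σ g⁻¹) (φ g⁻¹) x) = x := by
      intro g
      rw [TwistAux.Sp_comp σ φ hmul, mul_inv_cancel, TwistAux.Sp_one σ φ hone]
    have h1 : ∀ g : Γ, TwistAux.Tp B (TwistAux.Sp (σ g) (φ g) y) x
        = - TwistAux.Sp (σ g) (φ g)
            (TwistAux.Tp B (TwistAux.Sp (σ g⁻¹) (φ g⁻¹) x) y) := by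
      intro g
      have ha : TwistAux.Tp B (TwistAux.Sp (σ g) (φ g) y) x
          = - TwistAux.Tp B x (TwistAux.Sp (σ g) (φ g) y) :=
        eq_neg_of_add_eq_zero_right
          (TwistAux.Tantisym B hsym x (TwistAux.Sp (σ g) (φ g) y))
      rw [ha]
      conv_lhs => rw [← hxg g]
      rw [TwistAux.Teqv B σ φ hbr hpres g]
    rw [finsum_congr h1,
      show (∑ᶠ g : Γ, -(TwistAux.Sp (σ g) (φ g)
          (TwistAux.Tp B (TwistAux.Sp (σ g⁻¹) (φ g⁻¹) x) y)))
        = ∑ᶠ g : Γ, -(TwistAux.Sp (σ g⁻¹) (φ g⁻¹)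
            (TwistAux.Tp B (TwistAux.Sp (σ g) (φ g) x) y)) from
        (finsum_eq_of_bijective (fun g : Γ => g⁻¹) (Equiv.inv Γ).bijective
          (fun g => by rw [inv_inv])).symm]
    have hneg : (Function.support fun g : Γ =>
        -(TwistAux.Sp (σ g⁻¹) (φ g⁻¹)
          (TwistAux.Tp B (TwistAux.Sp (σ g) (φ g) x) y))).Finite := by
      refine (key x y).subset fun g hg => ?_
      intro h0
      apply hg
      show -(TwistAux.Sp (σ g⁻¹) (φ g⁻¹)
          (TwistAux.Tp B (TwistAux.Sp (σ g) (φ g) x) y)) = 0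
      rw [h0, map_zero, neg_zero]
    rw [← finsum_add_distrib (key x y) hneg]
    have hsub2 : (Function.support fun g : Γ =>
        TwistAux.Tp B (TwistAux.Sp (σ g) (φ g) x) y
          + -(TwistAux.Sp (σ g⁻¹) (φ g⁻¹)
              (TwistAux.Tp B (TwistAux.Sp (σ g) (φ g) x) y)))
        ⊆ ((key x y).toFinset : Set Γ) := by
      intro g hg
      rw [Set.Finite.coe_toFinset]
      intro h0
      apply hg
      show TwistAux.Tp B (TwistAux.Sp (σ g) (φ g) x) y
          + -(TwistAux.Sp (σ g⁻¹) (φ g⁻¹)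
              (TwistAux.Tp B (TwistAux.Sp (σ g) (φ g) x) y)) = 0
      rw [h0, map_zero, neg_zero, add_zero]
    rw [finsum_eq_sum_of_support_subset _ hsub2]
    refine Submodule.sum_mem _ fun g _ => ?_
    have hre : TwistAux.Tp B (TwistAux.Sp (σ g) (φ g) x) y
          + -(TwistAux.Sp (σ g⁻¹) (φ g⁻¹)
              (TwistAux.Tp B (TwistAux.Sp (σ g) (φ g) x) y))
        = -(TwistAux.Sp (σ g⁻¹) (φ g⁻¹)
              (TwistAux.Tp B (TwistAux.Sp (σ g) (φ g) x) y)
            - TwistAux.Tp B (TwistAux.Sp (σ g) (φ g) x) y) := by abel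
    rw [hre]
    exact Submodule.neg_mem _ (Submodule.subset_span ⟨g⁻¹, _, rfl⟩)
  -- Part 5 : the Jacobi identity
  · intro x y z
    have e1 : (∑ᶠ g : Γ, TwistAux.Tp B (TwistAux.Sp (σ g) (φ g) x)
          (∑ᶠ h : Γ, TwistAux.Tp B (TwistAux.Sp (σ h) (φ h) y) z))
        = ∑ᶠ g : Γ, ∑ᶠ h : Γ, TwistAux.Tp B (TwistAux.Sp (σ g) (φ g) x)
            (TwistAux.Tp B (TwistAux.Sp (σ h) (φ h) y) z) :=
      finsum_congr fun g =>
        TwistAux.Lmap_finsum (TwistAux.Tp B (TwistAux.Sp (σ g) (φ g) x)) (key y z)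
    have e2 : (∑ᶠ g : Γ, TwistAux.Tp B (TwistAux.Sp (σ g) (φ g) y)
          (∑ᶠ h : Γ, TwistAux.Tp B (TwistAux.Sp (σ h) (φ h) x) z))
        = ∑ᶠ g : Γ, ∑ᶠ h : Γ, TwistAux.Tp B (TwistAux.Sp (σ g) (φ g) y)
            (TwistAux.Tp B (TwistAux.Sp (σ h) (φ h) x) z) :=
      finsum_congr fun g =>
        TwistAux.Lmap_finsum (TwistAux.Tp B (TwistAux.Sp (σ g) (φ g) y)) (key x z)
    have e3 : (∑ᶠ g : Γ, TwistAux.Tp B (TwistAux.Sp (σ g) (φ g)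
          (∑ᶠ h : Γ, TwistAux.Tp B (TwistAux.Sp (σ h) (φ h) x) y)) z)
        = ∑ᶠ g : Γ, ∑ᶠ h : Γ, TwistAux.Tp B
            (TwistAux.Tp B (TwistAux.Sp (σ h) (φ h) x) (TwistAux.Sp (σ g) (φ g) y)) z := by
      refine finsum_congr fun g => ?_
      rw [TwistAux.Lmap_finsum (TwistAux.Sp (σ g) (φ g)) (key x y)]
      rw [finsum_congr (fun h : Γ =>
        show TwistAux.Sp (σ g) (φ g) (TwistAux.Tp B (TwistAux.Sp (σ h) (φ h) x) y)
          = TwistAux.Tp B (TwistAux.Sp (σ (g * h)) (φ (g * h)) x)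
              (TwistAux.Sp (σ g) (φ g) y) from by
        rw [← TwistAux.Teqv B σ φ hbr hpres g, TwistAux.Sp_comp σ φ hmul])]
      have hsupp : (Function.support fun h : Γ =>
          TwistAux.Tp B (TwistAux.Sp (σ (g * h)) (φ (g * h)) x)
            (TwistAux.Sp (σ g) (φ g) y)).Finite := by
        have he : (Function.support fun h : Γ =>
              TwistAux.Tp B (TwistAux.Sp (σ (g * h)) (φ (g * h)) x)
                (TwistAux.Sp (σ g) (φ g) y))
            = (fun h : Γ => g * h) ⁻¹'
              {g' : Γ | TwistAux.Tp B (TwistAux.Sp (σ g') (φ g') x)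
                (TwistAux.Sp (σ g) (φ g) y) ≠ 0} := rfl
        rw [he]
        exact (key x _).preimage (Set.injOn_of_injective (mul_right_injective g))
      rw [show TwistAux.Tp B (∑ᶠ h : Γ, TwistAux.Tp B
            (TwistAux.Sp (σ (g * h)) (φ (g * h)) x) (TwistAux.Sp (σ g) (φ g) y)) z
          = ∑ᶠ h : Γ, TwistAux.Tp B (TwistAux.Tp B
              (TwistAux.Sp (σ (g * h)) (φ (g * h)) x) (TwistAux.Sp (σ g) (φ g) y)) z from
        TwistAux.Lmap_finsum ((TwistAux.Tp B).flip z) hsupp]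
      exact finsum_eq_of_bijective (fun h : Γ => g * h) (Group.mulLeft_bijective g)
        (fun h => rfl)
    rw [e1, e2, e3]
    have e4 : ∀ g h : Γ, TwistAux.Tp B
          (TwistAux.Tp B (TwistAux.Sp (σ h) (φ h) x) (TwistAux.Sp (σ g) (φ g) y)) z
        = TwistAux.Tp B (TwistAux.Sp (σ h) (φ h) x)
            (TwistAux.Tp B (TwistAux.Sp (σ g) (φ g) y) z)
          - TwistAux.Tp B (TwistAux.Sp (σ g) (φ g) y)
              (TwistAux.Tp B (TwistAux.Sp (σ h) (φ h) x) z) := fun g h =>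
      (sub_eq_zero.mp (TwistAux.Tjacobi B hinv (TwistAux.Sp (σ h) (φ h) x)
        (TwistAux.Sp (σ g) (φ g) y) z)).symm
    have hB2in : ∀ g : Γ, (Function.support fun h : Γ =>
        TwistAux.Tp B (TwistAux.Sp (σ g) (φ g) y)
          (TwistAux.Tp B (TwistAux.Sp (σ h) (φ h) x) z)).Finite := by
      intro g
      refine (key x z).subset fun h hh => ?_
      intro h0
      apply hh
      show TwistAux.Tp B (TwistAux.Sp (σ g) (φ g) y)
          (TwistAux.Tp B (TwistAux.Sp (σ h) (φ h) x) z) = 0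
      rw [h0, map_zero]
    have e5 : (∑ᶠ g : Γ, ∑ᶠ h : Γ, TwistAux.Tp B
          (TwistAux.Tp B (TwistAux.Sp (σ h) (φ h) x) (TwistAux.Sp (σ g) (φ g) y)) z)
        = (∑ᶠ g : Γ, ∑ᶠ h : Γ, TwistAux.Tp B (TwistAux.Sp (σ h) (φ h) x)
              (TwistAux.Tp B (TwistAux.Sp (σ g) (φ g) y) z))
          - ∑ᶠ g : Γ, ∑ᶠ h : Γ, TwistAux.Tp B (TwistAux.Sp (σ g) (φ g) y)
              (TwistAux.Tp B (TwistAux.Sp (σ h) (φ h) x) z) := by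
      rw [finsum_congr fun g => finsum_congr fun h => e4 g h]
      rw [finsum_congr fun g => finsum_sub_distrib
        (key x (TwistAux.Tp B (TwistAux.Sp (σ g) (φ g) y) z)) (hB2in g)]
      refine finsum_sub_distrib ?_ ?_
      · refine (key y z).subset fun g hg => ?_
        intro h0
        apply hg
        show (∑ᶠ h : Γ, TwistAux.Tp B (TwistAux.Sp (σ h) (φ h) x)
            (TwistAux.Tp B (TwistAux.Sp (σ g) (φ g) y) z)) = 0
        rw [h0]
        exact finsum_eq_zero_of_forall_eq_zero fun h => map_zero _
      · have hU : (⋃ h ∈ ((key x z).toFinset : Set Γ),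
            {g : Γ | TwistAux.Tp B (TwistAux.Sp (σ g) (φ g) y)
              (TwistAux.Tp B (TwistAux.Sp (σ h) (φ h) x) z) ≠ 0}).Finite :=
          ((key x z).toFinset.finite_toSet).biUnion fun h _ => key y _
        refine hU.subset fun g hg => ?_
        have : ∃ h : Γ, TwistAux.Tp B (TwistAux.Sp (σ g) (φ g) y)
            (TwistAux.Tp B (TwistAux.Sp (σ h) (φ h) x) z) ≠ 0 := by
          by_contra hno
          push_neg at hno
          exact hg (finsum_eq_zero_of_forall_eq_zero hno)
        obtain ⟨h, hh⟩ := this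
        have hhmem : h ∈ ((key x z).toFinset : Set Γ) := by
          rw [Set.Finite.coe_toFinset]
          intro h0
          exact hh (by rw [h0, map_zero])
        exact Set.mem_biUnion hhmem hh
    rw [e5]
    have e6 : (∑ᶠ g : Γ, ∑ᶠ h : Γ, TwistAux.Tp B (TwistAux.Sp (σ g) (φ g) x)
          (TwistAux.Tp B (TwistAux.Sp (σ h) (φ h) y) z))
        = ∑ᶠ g : Γ, ∑ᶠ h : Γ, TwistAux.Tp B (TwistAux.Sp (σ h) (φ h) x)
            (TwistAux.Tp B (TwistAux.Sp (σ g) (φ g) y) z) := by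
      have hG : (⋃ h ∈ ((key y z).toFinset : Set Γ),
          {g : Γ | TwistAux.Tp B (TwistAux.Sp (σ g) (φ g) x)
            (TwistAux.Tp B (TwistAux.Sp (σ h) (φ h) y) z) ≠ 0}).Finite :=
        ((key y z).toFinset.finite_toSet).biUnion fun h _ => key x _
      refine TwistAux.finsum_rect_swap hG.toFinset (key y z).toFinset fun g h hF => ?_
      have hhmem : TwistAux.Tp B (TwistAux.Sp (σ h) (φ h) y) z ≠ 0 := by
        intro h0
        exact hF (by rw [h0, map_zero])
      have hh2 : h ∈ ((key y z).toFinset : Set Γ) := by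
        rw [Set.Finite.coe_toFinset]; exact hhmem
      exact ⟨(Set.Finite.mem_toFinset hG).mpr (Set.mem_biUnion hh2 hF),
        (Set.Finite.mem_toFinset (key y z)).mpr hhmem⟩
    rw [e6]
    abel
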